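/- For M, T, β > 0 with 0 ≤ β ≤ 1, the second frequency moment of the RRC magnitude spectrum with energy normalization T/M equals M²/(12T²) + ((π² − 8)M²β²)/(4π²T²). That is, letting |Ã(f)|² = (T/M) for |f| ≤ M(1−β)/(2T), |Ã(f)|² = (T/(2M))(1 + cos((πT/(βM))(|f| − M(1−β)/(2T)))) for M(1−β)/(2T) ≤ |f| ≤ M(1+β)/(2T), and 0 otherwise, one has ∫_{-∞}^{∞} f² |Ã(f)|² df = M²/(12T²) + (π²−8)M²β²/(4π²T²). -/

import Mathlib

open MeasureTheory Real

theorem rrc_second_frequency_moment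
    (M T β : ℝ) (hM : 0 < M) (hT : 0 < T) (hβ : 0 < β) (hβ1 : β ≤ 1)
    (A2 : ℝ → ℝ)
    (hA2 : A2 = fun f =>
      if |f| ≤ M * (1 - β) / (2 * T) then T / M
      else if |f| ≤ M * (1 + β) / (2 * T) then
        (T / (2 * M)) *
          (1 + Real.cos ((Real.pi * T / (β * M)) * (|f| - M * (1 - β) / (2 * T))))
      else 0) :
    (∫ f : ℝ, f ^ 2 * A2 f)
      = M ^ 2 / (12 * T ^ 2)
        + (Real.pi ^ 2 - 8) * M ^ 2 * β ^ 2 / (4 * Real.pi ^ 2 * T ^ 2) := by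
  have hM' : M ≠ 0 := ne_of_gt hM
  have hT' : T ≠ 0 := ne_of_gt hT
  have hβ' : β ≠ 0 := ne_of_gt hβ
  have hπ : (0:ℝ) < Real.pi := Real.pi_pos
  set a := M * (1 - β) / (2 * T) with ha_def
  set b := M * (1 + β) / (2 * T) with hb_def
  set c := Real.pi * T / (β * M) with hc_def
  have ha0 : 0 ≤ a := by
    rw [ha_def]
    apply div_nonneg _ (by positivity)
    nlinarith
  have hb0 : 0 < b := by rw [hb_def]; positivity
  have hab : a ≤ b := by
    rw [ha_def, hb_def, div_le_div_iff₀ (by positivity) (by positivity)]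
    nlinarith [mul_pos (mul_pos hM hT) hβ]
  have hc0 : 0 < c := by rw [hc_def]; positivity
  have hc' : c ≠ 0 := ne_of_gt hc0
  have hpi_eq : c * (b - a) = Real.pi := by
    rw [hc_def, ha_def, hb_def]; field_simp; ring
  -- continuous pieces
  set h2 : ℝ → ℝ := fun x => x ^ 2 * ((T / (2 * M)) * (1 + Real.cos (c * (x - a)))) with hh2
  set p : ℝ → ℝ := fun x => x ^ 2 * ((T / (2 * M)) * (1 + Real.cos (c * (-x - a)))) with hp
  have hh2cont : Continuous h2 := by
    rw [hh2]; fun_prop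
  have hpcont : Continuous p := by
    rw [hp]; fun_prop
  -- agreement on intervals
  have heq2 : Set.EqOn (fun f => f ^ 2 * A2 f) (fun f => f ^ 2 * (T / M)) (Set.uIcc (-a) a) := by
    intro f hf
    rw [Set.uIcc_of_le (by linarith)] at hf
    have habs : |f| ≤ a := abs_le.2 ⟨hf.1, hf.2⟩
    simp only [hA2, if_pos habs]
  have hval : ∀ f : ℝ, a ≤ f → f ≤ b → A2 f = (T / (2 * M)) * (1 + Real.cos (c * (f - a))) := by
    intro f h1 h2'
    have hf0 : 0 ≤ f := le_trans ha0 h1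
    simp only [hA2, abs_of_nonneg hf0]
    by_cases h : f ≤ a
    · have : f = a := le_antisymm h h1
      rw [if_pos h, this, sub_self, mul_zero, Real.cos_zero]
      field_simp
      ring
    · rw [if_neg h, if_pos h2']
  have heq3 : Set.EqOn (fun f => f ^ 2 * A2 f) h2 (Set.uIcc a b) := by
    intro f hf
    rw [Set.uIcc_of_le hab] at hf
    simp only [hh2]
    rw [hval f hf.1 hf.2]
  have heq1 : Set.EqOn (fun f => f ^ 2 * A2 f) p (Set.uIcc (-b) (-a)) := by
    intro f hf
    rw [Set.uIcc_of_le (by linarith)] at hf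
    have hA : A2 f = A2 (-f) := by simp only [hA2, abs_neg]
    simp only [hp]
    rw [hA, hval (-f) (by linarith [hf.2]) (by linarith [hf.1])]
  -- integrability
  have hI1 : IntervalIntegrable (fun f => f ^ 2 * A2 f) volume (-b) (-a) :=
    (hpcont.intervalIntegrable _ _).congr
      (fun x hx => (heq1 (Set.uIoc_subset_uIcc hx)).symm)
  have hI2 : IntervalIntegrable (fun f => f ^ 2 * A2 f) volume (-a) a :=
    (((continuous_pow 2).mul continuous_const).intervalIntegrable _ _).congr
      (fun x hx => (heq2 (Set.uIoc_subset_uIcc hx)).symm)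
  have hI3 : IntervalIntegrable (fun f => f ^ 2 * A2 f) volume a b :=
    (hh2cont.intervalIntegrable _ _).congr
      (fun x hx => (heq3 (Set.uIoc_subset_uIcc hx)).symm)
  -- reduce to interval integral
  have hsupp : ∀ f : ℝ, f ∉ Set.Icc (-b) b → f ^ 2 * A2 f = 0 := by
    intro f hf
    rw [Set.mem_Icc, ← abs_le, not_le] at hf
    have h1 : ¬ |f| ≤ a := not_le.2 (lt_of_le_of_lt hab hf)
    have h2' : ¬ |f| ≤ b := not_le.2 hf
    simp only [hA2, if_neg h1, if_neg h2', mul_zero]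
  have key : (∫ f : ℝ, f ^ 2 * A2 f) = ∫ f in (-b)..b, f ^ 2 * A2 f := by
    rw [intervalIntegral.integral_of_le (by linarith), ← integral_Icc_eq_integral_Ioc,
      setIntegral_eq_integral_of_forall_compl_eq_zero hsupp]
  rw [key]
  have hsplit : (∫ f in (-b)..b, f ^ 2 * A2 f)
      = (∫ f in (-b)..(-a), f ^ 2 * A2 f) + (∫ f in (-a)..a, f ^ 2 * A2 f)
        + (∫ f in a..b, f ^ 2 * A2 f) := by
    rw [intervalIntegral.integral_add_adjacent_intervals hI1 hI2,
      intervalIntegral.integral_add_adjacent_intervals (hI1.trans hI2) hI3]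
  rw [hsplit, intervalIntegral.integral_congr heq1, intervalIntegral.integral_congr heq2,
    intervalIntegral.integral_congr heq3]
  -- middle integral
  have I2 : (∫ f in (-a)..a, f ^ 2 * (T / M)) = (a ^ 3 - (-a) ^ 3) / 3 * (T / M) := by
    rw [intervalIntegral.integral_mul_const, integral_pow]
    norm_num
  -- antiderivative for h2
  set F : ℝ → ℝ := fun x => (T / (2 * M)) * (x ^ 3 / 3 + x ^ 2 * Real.sin (c * (x - a)) / c
      + 2 * x * Real.cos (c * (x - a)) / c ^ 2 - 2 * Real.sin (c * (x - a)) / c ^ 3) with hF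
  have hderiv : ∀ x : ℝ, HasDerivAt F (h2 x) x := by
    intro x
    have harg : HasDerivAt (fun x : ℝ => c * (x - a)) c x := by
      simpa using (((hasDerivAt_id x).sub_const a).const_mul c)
    have hsin : HasDerivAt (fun x : ℝ => Real.sin (c * (x - a)))
        (Real.cos (c * (x - a)) * c) x := (Real.hasDerivAt_sin _).comp x harg
    have hcos : HasDerivAt (fun x : ℝ => Real.cos (c * (x - a)))
        (-Real.sin (c * (x - a)) * c) x := (Real.hasDerivAt_cos _).comp x harg
    have H : HasDerivAt F ((T / (2 * M)) * ((3 * x ^ 2) / 3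
        + (2 * x ^ 1 * Real.sin (c * (x - a)) + x ^ 2 * (Real.cos (c * (x - a)) * c)) / c
        + (2 * 1 * Real.cos (c * (x - a)) + 2 * x * (-Real.sin (c * (x - a)) * c)) / c ^ 2
        - 2 * (Real.cos (c * (x - a)) * c) / c ^ 3)) x := by
      refine HasDerivAt.const_mul _ ?_
      exact ((((hasDerivAt_pow 3 x).div_const 3).add
        (((hasDerivAt_pow 2 x).mul hsin).div_const c)).add
        ((((hasDerivAt_id x).const_mul 2).mul hcos).div_const (c ^ 2))).sub
        ((hsin.const_mul 2).div_const (c ^ 3))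
    convert H using 1
    simp only [hh2]
    field_simp
    ring
  have I3 : (∫ f in a..b, h2 f) = F b - F a :=
    intervalIntegral.integral_eq_sub_of_hasDerivAt (fun x _ => hderiv x)
      (hh2cont.intervalIntegrable _ _)
  have I1 : (∫ f in (-b)..(-a), p f) = F b - F a := by
    have : (∫ f in (-b)..(-a), p f) = ∫ f in a..b, p (-f) :=
      (intervalIntegral.integral_comp_neg p).symm
    rw [this, ← I3]
    apply intervalIntegral.integral_congr
    intro x _
    simp only [hp, hh2, neg_neg, neg_sq]
  rw [I1, I2, I3]
  have hFb : F b = (T / (2 * M)) * (b ^ 3 / 3 - 2 * b / c ^ 2) := by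
    simp only [hF]
    rw [show c * (b - a) = Real.pi from hpi_eq, Real.sin_pi, Real.cos_pi]
    ring
  have hFa : F a = (T / (2 * M)) * (a ^ 3 / 3 + 2 * a / c ^ 2) := by
    simp only [hF, sub_self, mul_zero, Real.sin_zero, Real.cos_zero]
    ring
  rw [hFb, hFa, ha_def, hb_def, hc_def]
  have h2T : (2 : ℝ) * T ≠ 0 := by positivity
  field_simp
  ring
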